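/- Let G be a connected simple graph on n vertices with Laplacian matrix L, let 𝟙 ∈ ℝⁿ be the all-ones vector, let Γ = [L | 𝟙] be the n×(n+1) matrix obtained from L by appending the column 𝟙, and let J be the n×n all-ones matrix. Then the n-dimensional Lebesgue volume of the zonotope Z(Γ) equals det(L + J). -/

import Mathlib

open MeasureTheory

open Set Matrix

/-- cube + segment [0,h]·𝟙 -/
def Kset (m : ℕ) (h : ℝ) : Set (Fin m → ℝ) :=
  {w | ∃ c ∈ Set.Icc (0:ℝ) h, ∀ i, w i - c ∈ Set.Icc (0:ℝ) 1}

lemma Kset_empty (m : ℕ) {h : ℝ} (hh : h < 0) : Kset m h = ∅ := by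
  ext w
  simp only [Kset, mem_setOf_eq, mem_empty_iff_false, iff_false]
  rintro ⟨c, ⟨hc0, hch⟩, -⟩
  linarith

lemma Kset_isCompact (m : ℕ) (h : ℝ) : IsCompact (Kset m h) := by
  have himage : Kset m h =
      (fun p : ℝ × (Fin m → ℝ) => fun i => p.2 i + p.1) ''
        (Set.Icc 0 h ×ˢ Set.univ.pi fun _ => Set.Icc (0:ℝ) 1) := by
    ext w
    constructor
    · rintro ⟨c, hc, hw⟩
      exact ⟨(c, fun i => w i - c), ⟨hc, fun i _ => hw i⟩, by funext i; ring⟩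
    · rintro ⟨⟨c, x⟩, ⟨hc, hx⟩, rfl⟩
      exact ⟨c, hc, fun i => by simpa using hx i (mem_univ i)⟩
  rw [himage]
  exact ((isCompact_Icc.prod (isCompact_univ_pi fun _ => isCompact_Icc)).image
    (continuous_pi fun i => ((continuous_apply i).comp continuous_snd).add continuous_fst))

lemma Kset_measurable (m : ℕ) (h : ℝ) : MeasurableSet (Kset m h) :=
  (Kset_isCompact m h).isClosed.measurableSet

lemma Kset_translate (m : ℕ) (a b : ℝ) :
    {w : Fin m → ℝ | ∃ c ∈ Set.Icc a b, ∀ i, w i - c ∈ Set.Icc (0:ℝ) 1} =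
      (fun w : Fin m → ℝ => w + fun _ => -a) ⁻¹' Kset m (b - a) := by
  ext w
  constructor
  · rintro ⟨c, ⟨hc1, hc2⟩, hw⟩
    refine ⟨c - a, ⟨by linarith, by linarith⟩, fun i => ?_⟩
    have := hw i
    have h1 := this.1; have h2 := this.2
    constructor <;> · simp only [Pi.add_apply]; linarith
  · rintro ⟨c, ⟨hc1, hc2⟩, hw⟩
    refine ⟨c + a, ⟨by linarith, by linarith⟩, fun i => ?_⟩
    have := hw i
    simp only [Pi.add_apply] at this
    constructor <;> linarith [this.1, this.2]

lemma Kset_translate_vol (m : ℕ) (a b : ℝ) :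
    volume {w : Fin m → ℝ | ∃ c ∈ Set.Icc a b, ∀ i, w i - c ∈ Set.Icc (0:ℝ) 1} =
      volume (Kset m (b - a)) := by
  rw [Kset_translate]
  exact measure_preimage_add_right volume _ _

lemma Kset_zero_vol (h : ℝ) (hh : 0 ≤ h) : volume (Kset 0 h) = 1 := by
  have : Kset 0 h = Set.univ := by
    ext w
    simp only [Kset, mem_setOf_eq, mem_univ, iff_true]
    exact ⟨0, ⟨le_refl _, hh⟩, fun i => i.elim0⟩
  rw [this]
  rw [show (Set.univ : Set (Fin 0 → ℝ)) = Set.pi Set.univ (fun _ => Set.univ) by simp]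
  rw [volume_pi_pi]
  simp

lemma Kset_vol : ∀ (m : ℕ) (h : ℝ), 0 ≤ h → h ≤ 1 →
    volume (Kset m h) = ENNReal.ofReal (1 + m * h) := by
  intro m
  induction m with
  | zero => intro h h0 h1; simpa using Kset_zero_vol h h0
  | succ m ih =>
    intro h h0 h1
    set e := MeasurableEquiv.piFinSuccAbove (fun _ : Fin (m + 1) => ℝ) 0 with he
    have hmp := volume_preserving_piFinSuccAbove (fun _ : Fin (m + 1) => ℝ) 0
    set T : Set (ℝ × (Fin m → ℝ)) :=
      {p | ∃ c ∈ Set.Icc (0:ℝ) h, p.1 - c ∈ Set.Icc (0:ℝ) 1 ∧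
        ∀ i, p.2 i - c ∈ Set.Icc (0:ℝ) 1} with hT
    have hKT : Kset (m + 1) h = e ⁻¹' T := by
      ext w
      simp only [Kset, mem_setOf_eq, mem_preimage, hT, he,
        MeasurableEquiv.piFinSuccAbove, MeasurableEquiv.coe_mk, Equiv.coe_fn_mk]
      constructor
      · rintro ⟨c, hc, hw⟩
        exact ⟨c, hc, hw 0, fun i => hw _⟩
      · rintro ⟨c, hc, h0', hw⟩
        refine ⟨c, hc, fun i => ?_⟩
        rcases Fin.eq_zero_or_eq_succ i with rfl | ⟨j, rfl⟩
        · exact h0'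
        · simpa [Fin.succAbove, Fin.tail] using hw j
    have hTmeas : MeasurableSet T := by
      have : T = e '' Kset (m + 1) h := by
        rw [hKT, MeasurableEquiv.image_preimage]
      rw [this]
      exact e.measurableSet_image.2 (Kset_measurable _ _)
    have hvol : volume (Kset (m + 1) h) = (volume.prod volume) T := by
      rw [hKT]
      exact hmp.measure_preimage hTmeas.nullMeasurableSet
    rw [hvol, Measure.prod_apply hTmeas]
    -- slices
    have hslice : ∀ s : ℝ, volume (Prod.mk s ⁻¹' T) =
        volume (Kset m (min h s - max 0 (s - 1))) := by
      intro s
      have : Prod.mk s ⁻¹' T =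
          {w : Fin m → ℝ | ∃ c ∈ Set.Icc (max 0 (s-1)) (min h s),
            ∀ i, w i - c ∈ Set.Icc (0:ℝ) 1} := by
        ext w
        simp only [mem_preimage, hT, mem_setOf_eq]
        constructor
        · rintro ⟨c, ⟨hc0, hch⟩, ⟨hs0, hs1⟩, hw⟩
          exact ⟨c, ⟨max_le hc0 (by linarith), le_min hch (by linarith)⟩, hw⟩
        · rintro ⟨c, ⟨hc1, hc2⟩, hw⟩
          have ha0 : (0:ℝ) ≤ c := le_trans (le_max_left 0 (s-1)) hc1
          have ha1 : s - 1 ≤ c := le_trans (le_max_right 0 (s-1)) hc1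
          have hb0 : c ≤ h := le_trans hc2 (min_le_left h s)
          have hb1 : c ≤ s := le_trans hc2 (min_le_right h s)
          exact ⟨c, ⟨ha0, hb0⟩, ⟨by linarith, by linarith⟩, hw⟩
      rw [this, Kset_translate_vol]
    simp_rw [hslice]
    have hg : ∀ s : ℝ, volume (Kset m (min h s - max 0 (s - 1))) =
        Set.indicator (Set.Icc 0 (1+h))
          (fun s => ENNReal.ofReal (1 + m * (min h s - max 0 (s-1)))) s := by
      intro s
      by_cases hs : s ∈ Set.Icc (0:ℝ) (1+h)
      · rw [Set.indicator_of_mem hs]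
        obtain ⟨hs0, hs1⟩ := hs
        have hab : max 0 (s-1) ≤ min h s :=
          max_le (le_min h0 hs0) (le_min (by linarith) (by linarith))
        have hle1 : min h s - max 0 (s-1) ≤ 1 := by
          have := min_le_left h s
          have := le_max_left (0:ℝ) (s-1)
          linarith
        exact ih _ (by linarith) hle1
      · rw [Set.indicator_of_notMem hs]
        simp only [Set.mem_Icc, not_and_or, not_le] at hs
        have hneg : min h s - max 0 (s-1) < 0 := by
          rcases hs with hs | hs
          · have := min_le_right h s
            have := le_max_left (0:ℝ) (s-1)
            linarith
          · have := min_le_left h s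
            have := le_max_right (0:ℝ) (s-1)
            linarith
        rw [Kset_empty m hneg]
        simp
    simp_rw [hg]
    rw [lintegral_indicator measurableSet_Icc]
    set f : ℝ → ℝ := fun s => 1 + m * (min h s - max 0 (s-1)) with hfdef
    have hfc : Continuous f := by
      apply continuous_const.add
      apply continuous_const.mul
      exact (continuous_const.min continuous_id).sub
        (continuous_const.max (continuous_id.sub continuous_const))
    have hnn : 0 ≤ᵐ[volume.restrict (Set.Icc (0:ℝ) (1+h))] f := by
      filter_upwards [ae_restrict_mem measurableSet_Icc] with s hs
      obtain ⟨hs0, hs1⟩ := hs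
      have hab : max 0 (s-1) ≤ min h s :=
        max_le (le_min h0 hs0) (le_min (by linarith) (by linarith))
      have : 0 ≤ (m:ℝ) * (min h s - max 0 (s-1)) :=
        mul_nonneg (Nat.cast_nonneg m) (by linarith)
      simp only [Pi.zero_apply, hfdef]
      linarith
    rw [← ofReal_integral_eq_lintegral_ofReal (hfc.integrableOn_Icc) hnn]
    congr 1
    rw [MeasureTheory.integral_Icc_eq_integral_Ioc,
      ← intervalIntegral.integral_of_le (by linarith : (0:ℝ) ≤ 1 + h)]
    have hii : ∀ a b : ℝ, IntervalIntegrable f volume a b :=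
      fun a b => hfc.intervalIntegrable a b
    rw [← intervalIntegral.integral_add_adjacent_intervals (hii 0 1) (hii 1 (1+h)),
      ← intervalIntegral.integral_add_adjacent_intervals (hii 0 h) (hii h 1)]
    have p1 : ∫ s in (0:ℝ)..h, f s = h + m * h^2 / 2 := by
      rw [intervalIntegral.integral_congr (g := fun s => 1 + (m:ℝ) * s)
        (fun s hs => by
          rw [Set.uIcc_of_le h0] at hs
          obtain ⟨hs0, hs1⟩ := hs
          simp only [hfdef]
          rw [min_eq_right hs1, max_eq_left (by linarith)]
          ring)]
      rw [intervalIntegral.integral_add (intervalIntegrable_const)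
        (Continuous.intervalIntegrable (show Continuous fun x : ℝ => (m:ℝ) * x from continuous_const.mul continuous_id) _ _),
        intervalIntegral.integral_const, intervalIntegral.integral_const_mul,
        integral_id]
      simp; ring
    have p2 : ∫ s in h..(1:ℝ), f s = (1-h) * (1 + m * h) := by
      rw [intervalIntegral.integral_congr (g := fun _ => 1 + (m:ℝ) * h)
        (fun s hs => by
          rw [Set.uIcc_of_le h1] at hs
          obtain ⟨hs0, hs1⟩ := hs
          simp only [hfdef]
          rw [min_eq_left hs0, max_eq_left (by linarith)]
          ring)]
      rw [intervalIntegral.integral_const]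
      simp [smul_eq_mul]
    have p3 : ∫ s in (1:ℝ)..(1+h), f s = h * (1 + m*(h+1)) - m * ((1+h)^2 - 1)/2 := by
      rw [intervalIntegral.integral_congr (g := fun s => (1 + (m:ℝ)*(h+1)) - m * s)
        (fun s hs => by
          rw [Set.uIcc_of_le (by linarith : (1:ℝ) ≤ 1 + h)] at hs
          obtain ⟨hs0, hs1⟩ := hs
          simp only [hfdef]
          rw [min_eq_left (by linarith), max_eq_right (by linarith)]
          ring)]
      rw [intervalIntegral.integral_sub (intervalIntegrable_const)
        (Continuous.intervalIntegrable (show Continuous fun x : ℝ => (m:ℝ) * x from continuous_const.mul continuous_id) _ _),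
        intervalIntegral.integral_const, intervalIntegral.integral_const_mul,
        integral_id]
      simp [smul_eq_mul]; ring
    rw [p1, p2, p3]
    push_cast
    ring

def Sset (n : ℕ) : Set (Fin n → ℝ) :=
  {z | (∑ i, z i) ∈ Set.Icc (0:ℝ) 1 ∧ ∃ c : ℝ, ∀ i, z i - c ∈ Set.Icc (0:ℝ) 1}

section SsetVol

variable (m : ℕ)

noncomputable def A1 : Matrix (Fin (m+1)) (Fin (m+1)) ℝ :=
  fun i j => if i = j then 1 else if j = 0 then -1 else 0

noncomputable def A2 : Matrix (Fin (m+1)) (Fin (m+1)) ℝ :=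
  fun i j => if i = 0 then (if j = 0 then (m+1 : ℝ) else 1) else (if i = j then 1 else 0)

lemma A1_mulVec (z : Fin (m+1) → ℝ) (i : Fin (m+1)) :
    (A1 m *ᵥ z) i = z i - (if i = 0 then 0 else z 0) := by
  simp only [Matrix.mulVec, dotProduct, A1]
  have : ∀ j : Fin (m+1), (if i = j then (1:ℝ) else if j = 0 then -1 else 0) * z j
      = (if j = i then z j else 0) + (if j = 0 ∧ ¬ i = 0 then -z j else 0) := by
    intro j
    by_cases h1 : i = j
    · subst h1
      by_cases h2 : i = 0 <;> simp [h2]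
    · by_cases h2 : j = 0
      · subst h2
        have hi0 : ¬ i = 0 := h1
        simp [h1, Ne.symm h1, hi0]
      · simp [h1, Ne.symm h1, h2]
  rw [Finset.sum_congr rfl fun j _ => this j, Finset.sum_add_distrib]
  rw [Finset.sum_ite_eq' Finset.univ i z]
  by_cases hi : i = 0
  · simp [hi]
  · simp only [hi, not_false_iff, and_true]
    rw [Finset.sum_ite_eq' Finset.univ (0 : Fin (m+1)) (fun j => -z j)]
    simp [hi]
    ring

lemma A2_mulVec (w : Fin (m+1) → ℝ) (i : Fin (m+1)) :
    (A2 m *ᵥ w) i = if i = 0 then (m : ℝ) * w 0 + ∑ j, w j else w i := by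
  simp only [Matrix.mulVec, dotProduct, A2]
  by_cases hi : i = 0
  · simp only [hi, if_true]
    have : ∀ j : Fin (m+1), (if j = 0 then (m+1:ℝ) else 1) * w j
        = (if j = 0 then (m:ℝ) * w j else 0) + w j := by
      intro j
      by_cases h : j = 0
      · subst h; simp; ring
      · simp [h]
    rw [Finset.sum_congr rfl fun j _ => this j, Finset.sum_add_distrib,
      Finset.sum_ite_eq' Finset.univ (0 : Fin (m+1)) (fun j => (m:ℝ) * w j)]
    simp
  · simp only [hi, if_false]
    rw [Finset.sum_congr rfl (fun j _ => show (if i = j then (1:ℝ) else 0) * w j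
        = if j = i then w j else 0 by by_cases h : i = j <;> simp [h, Ne.symm, eq_comm])]
    rw [Finset.sum_ite_eq' Finset.univ i w]
    simp

lemma A1_det : (A1 m).det = 1 := by
  rw [Matrix.det_of_lowerTriangular (A1 m) (by
    intro i j hji
    have h : i < j := hji
    have hj0 : j ≠ 0 := by
      intro hh; subst hh; exact (Fin.not_lt_zero i) h
    simp [A1, hj0, ne_of_lt h])]
  simp [A1]

lemma A2_det : (A2 m).det = (m + 1 : ℝ) := by
  rw [Matrix.det_of_upperTriangular (show (A2 m).BlockTriangular id by
    intro i j hij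
    have h : j < i := hij
    have hi0 : i ≠ 0 := by
      intro hh; subst hh; exact (Fin.not_lt_zero j) h
    simp [A2, hi0, (ne_of_lt h).symm])]
  simp only [A2]
  rw [Fin.prod_univ_succ]
  simp [Fin.succ_ne_zero]

lemma sum_A1_mulVec (z : Fin (m+1) → ℝ) :
    ∑ j, (A1 m *ᵥ z) j = (∑ j, z j) - m * z 0 := by
  simp_rw [A1_mulVec]
  rw [Finset.sum_sub_distrib]
  congr 1
  rw [Fin.sum_univ_succ]
  simp [Fin.succ_ne_zero]

lemma phi_apply_zero (z : Fin (m+1) → ℝ) :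
    (A2 m *ᵥ (A1 m *ᵥ z)) 0 = ∑ j, z j := by
  rw [A2_mulVec, if_pos rfl, sum_A1_mulVec, A1_mulVec]
  simp

lemma phi_apply_succ (z : Fin (m+1) → ℝ) (i : Fin m) :
    (A2 m *ᵥ (A1 m *ᵥ z)) i.succ = z i.succ - z 0 := by
  rw [A2_mulVec, if_neg (Fin.succ_ne_zero i), A1_mulVec, if_neg (Fin.succ_ne_zero i)]

end SsetVol

noncomputable def Tset (m : ℕ) : Set (Fin (m+1) → ℝ) :=
  {v | v 0 ∈ Set.Icc (0:ℝ) 1 ∧ ∃ c ∈ Set.Icc (-1:ℝ) 0,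
    ∀ i : Fin m, v i.succ - c ∈ Set.Icc (0:ℝ) 1}

lemma Tset_eq_image (m : ℕ) :
    Tset m = Matrix.toLin' (A2 m) '' (Matrix.toLin' (A1 m) '' Sset (m+1)) := by
  rw [Set.image_image]
  simp only [Matrix.toLin'_apply]
  ext v
  constructor
  · rintro ⟨⟨hv0, hv1⟩, c, ⟨hc1, hc2⟩, hvc⟩
    set z0 : ℝ := (v 0 - ∑ i : Fin m, v i.succ) / (m + 1) with hz0
    set z : Fin (m+1) → ℝ := fun i => if i = 0 then z0 else v i + z0 with hz
    have hsum : ∑ j, z j = v 0 := by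
      rw [Fin.sum_univ_succ]
      simp only [hz, if_pos rfl, Fin.succ_ne_zero, if_neg, ite_false]
      rw [Finset.sum_add_distrib, Finset.sum_const, Finset.card_univ, Fintype.card_fin]
      have hm : (m : ℝ) + 1 ≠ 0 := by positivity
      have h' : ((m:ℝ)+1) * z0 = v 0 - ∑ i : Fin m, v i.succ := by rw [hz0]; exact mul_div_cancel₀ _ hm
      linear_combination h'
    refine ⟨z, ⟨by rw [hsum]; exact ⟨hv0, hv1⟩, ⟨c + z0, fun i => ?_⟩⟩, ?_⟩
    · rcases Fin.eq_zero_or_eq_succ i with rfl | ⟨j, rfl⟩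
      · simp only [hz, if_pos rfl]
        constructor <;> · simp; linarith
      · have := hvc j
        simp only [hz, if_neg (Fin.succ_ne_zero j)]
        constructor <;> · simp; linarith [this.1, this.2]
    · funext i
      rcases Fin.eq_zero_or_eq_succ i with rfl | ⟨j, rfl⟩
      · show (A2 m *ᵥ A1 m *ᵥ z) 0 = v 0
        rw [phi_apply_zero, hsum]
      · show (A2 m *ᵥ A1 m *ᵥ z) j.succ = v j.succ
        rw [phi_apply_succ]
        simp [hz, Fin.succ_ne_zero j]
  · rintro ⟨z, ⟨⟨hz0, hz1⟩, c, hc⟩, rfl⟩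
    refine ⟨by show (A2 m *ᵥ A1 m *ᵥ z) 0 ∈ Set.Icc (0:ℝ) 1
               rw [phi_apply_zero]; exact ⟨hz0, hz1⟩, c - z 0, ⟨?_, ?_⟩, fun i => ?_⟩
    · linarith [(hc 0).2]
    · linarith [(hc 0).1]
    · show (A2 m *ᵥ A1 m *ᵥ z) i.succ - (c - z 0) ∈ Set.Icc (0:ℝ) 1
      rw [phi_apply_succ]
      constructor
      · linarith [(hc i.succ).1]
      · linarith [(hc i.succ).2]

lemma Tset_vol (m : ℕ) : volume (Tset m) = ENNReal.ofReal (m + 1) := by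
  set Wm : Set (Fin m → ℝ) := (fun w => w + fun _ => (1:ℝ)) ⁻¹' Kset m 1 with hWm
  have hWmeas : MeasurableSet Wm :=
    (Kset_measurable m 1).preimage (measurable_id.add_const _)
  set e := MeasurableEquiv.piFinSuccAbove (fun _ : Fin (m + 1) => ℝ) 0 with he
  have hmp := volume_preserving_piFinSuccAbove (fun _ : Fin (m + 1) => ℝ) 0
  have hT : Tset m = e ⁻¹' (Set.Icc (0:ℝ) 1 ×ˢ Wm) := by
    ext v
    simp only [Tset, Set.mem_setOf_eq, Set.mem_preimage, he,
      MeasurableEquiv.piFinSuccAbove, MeasurableEquiv.coe_mk, Equiv.coe_fn_mk,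
      Set.mem_prod, hWm, Kset, Fin.succAbove_zero]
    constructor
    · rintro ⟨h0, c, ⟨hc1, hc2⟩, hc⟩
      refine ⟨h0, c + 1, ⟨by linarith, by linarith⟩, fun i => ?_⟩
      have := hc i
      simp only [Pi.add_apply]
      constructor <;> · simp [Fin.tail]; linarith [this.1, this.2]
    · rintro ⟨h0, c, ⟨hc1, hc2⟩, hc⟩
      refine ⟨h0, c - 1, ⟨by linarith, by linarith⟩, fun i => ?_⟩
      have := hc i
      simp only [Pi.add_apply, Fin.tail] at this
      constructor <;> · simp [Fin.tail] at this ⊢; linarith [this.1, this.2]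
  rw [hT, hmp.measure_preimage (measurableSet_Icc.prod hWmeas).nullMeasurableSet,
    Measure.volume_eq_prod, Measure.prod_prod, Real.volume_Icc]
  have hWvol : volume Wm = ENNReal.ofReal (1 + m) := by
    rw [hWm, measure_preimage_add_right volume _ _, Kset_vol m 1 zero_le_one le_rfl]
    norm_num
  rw [hWvol]
  rw [← ENNReal.ofReal_mul (by norm_num)]
  norm_num
  rw [add_comm]

lemma Sset_vol (m : ℕ) : volume (Sset (m+1)) = 1 := by
  have h1 := Tset_eq_image m
  have h2 : volume (Tset m) = ENNReal.ofReal (m+1) * volume (Sset (m+1)) := by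
    rw [h1, Measure.addHaar_image_linearMap, Measure.addHaar_image_linearMap,
      LinearMap.det_toLin', LinearMap.det_toLin', A1_det, A2_det]
    rw [abs_of_nonneg (by positivity : (0:ℝ) ≤ (m:ℝ)+1)]
    simp [mul_assoc]
  rw [Tset_vol] at h2
  have hne : ENNReal.ofReal ((m:ℝ)+1) ≠ 0 := by
    simp only [ne_eq, ENNReal.ofReal_eq_zero, not_le]
    positivity
  have h3 : ENNReal.ofReal ((m:ℝ) + 1) * 1 = ENNReal.ofReal ((m:ℝ) + 1) * volume (Sset (m+1)) := by
    rw [mul_one]; exact h2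
  exact ((ENNReal.mul_right_inj hne ENNReal.ofReal_ne_top).mp h3).symm

/-- The zonotope generated by a `d × k` real matrix: the image of the unit cube
`[0,1]^k` under the linear map `x ↦ M x`. -/
def zonotope {d k : ℕ} (M : Matrix (Fin d) (Fin k) ℝ) : Set (Fin d → ℝ) :=
  {y | ∃ x : Fin k → ℝ, (∀ i, x i ∈ Set.Icc (0 : ℝ) 1) ∧ y = M.mulVec x}

/-- For a connected simple graph `G` on `n` vertices with Laplacian `L`,
appending the all-ones column `𝟙` to `L` to form `Γ = [L | 𝟙]`, the
`n`-dimensional Lebesgue volume of the zonotope `Z(Γ)` equals `det (L + J)`,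
where `J` is the all-ones matrix. -/
theorem stmt19 (n : ℕ) (G : SimpleGraph (Fin n)) [DecidableRel G.Adj]
    (hconn : G.Connected)
    (L J : Matrix (Fin n) (Fin n) ℝ)
    (hLdef : L = SimpleGraph.lapMatrix ℝ G)
    (hJ : J = fun _ _ => (1 : ℝ))
    (Γ : Matrix (Fin n) (Fin (n + 1)) ℝ)
    (hΓ : Γ = fun i (j : Fin (n + 1)) => if h : (j : ℕ) < n then L i ⟨(j : ℕ), h⟩ else 1) :
    volume (zonotope Γ) = ENNReal.ofReal (L + J).det := by
  rcases n with _ | m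
  · exact absurd hconn.nonempty (by rintro ⟨i⟩; exact i.elim0)
  have hL1 : L *ᵥ (fun _ => (1:ℝ)) = 0 := by
    rw [hLdef]; exact SimpleGraph.lapMatrix_mulVec_const_eq_zero G
  have hΓc : ∀ i (j : Fin (m+1)), Γ i j.castSucc = L i j := by
    intro i j
    rw [hΓ]
    dsimp only
    rw [dif_pos (by simpa using j.isLt)]
    try exact congrArg (L i) (Fin.ext (by simp))
  have hΓl : ∀ i, Γ i (Fin.last (m+1)) = 1 := by
    intro i
    rw [hΓ]
    dsimp only
    rw [dif_neg (by simp)]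
  have hJv : ∀ (z : Fin (m+1) → ℝ) i, (J *ᵥ z) i = ∑ j, z j := by
    intro z i
    rw [hJ]
    simp [Matrix.mulVec, dotProduct]
  have hrow : ∀ i, ∑ j, L i j = 0 := by
    intro i
    have := congrFun hL1 i
    simpa [Matrix.mulVec, dotProduct] using this
  have hzon : zonotope Γ = Matrix.toLin' (L + J) '' Sset (m+1) := by
    ext y
    simp only [zonotope, Set.mem_setOf_eq, Set.mem_image, Matrix.toLin'_apply, Sset,
      Set.mem_Icc]
    constructor
    · rintro ⟨x, hx, rfl⟩
      set x' : Fin (m+1) → ℝ := fun i => x i.castSucc with hx'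
      set t : ℝ := x (Fin.last (m+1)) with ht
      set c : ℝ := (t - ∑ i, x' i) / (m+1) with hc
      set zc : Fin (m+1) → ℝ := fun i => x' i + c with hzc
      have hsum : ∑ i, zc i = t := by
        simp only [hzc]
        rw [Finset.sum_add_distrib, Finset.sum_const, Finset.card_univ, Fintype.card_fin]
        rw [hc]
        rw [nsmul_eq_mul, Nat.cast_add, Nat.cast_one, mul_div_cancel₀ _ (by positivity : (m:ℝ)+1 ≠ 0)]; ring
      refine ⟨zc, ⟨by rw [hsum]; exact ⟨(hx _).1, (hx _).2⟩,
        c, fun i => by simpa [hzc] using hx i.castSucc⟩, ?_⟩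
      funext i
      have hmulx : (Γ *ᵥ x) i = (L *ᵥ x') i + t := by
        simp only [Matrix.mulVec, dotProduct]
        rw [Fin.sum_univ_castSucc]
        simp only [hΓc, hΓl, one_mul]
        rfl
      have hLz : L *ᵥ zc = L *ᵥ x' := by
        have : zc = x' + c • (fun _ => (1:ℝ)) := by funext j; simp [hzc]
        rw [this, Matrix.mulVec_add, Matrix.mulVec_smul, hL1, smul_zero, add_zero]
      rw [Matrix.add_mulVec, Pi.add_apply, hJv, hLz, hsum, hmulx]
    · rintro ⟨z, ⟨⟨hs0, hs1⟩, c, hcz⟩, rfl⟩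
      set x : Fin (m+2) → ℝ :=
        fun j => if h : (j:ℕ) < m+1 then z ⟨j, h⟩ - c else ∑ i, z i with hxdef
      have hxc : ∀ j : Fin (m+1), x j.castSucc = z j - c := by
        intro j
        simp only [hxdef]
        rw [dif_pos (by simpa using j.isLt)]
        try exact congrArg (fun w => z w - c) (Fin.ext (by simp))
      have hxl : x (Fin.last (m+1)) = ∑ i, z i := by
        simp only [hxdef]
        rw [dif_neg (by simp)]
      refine ⟨x, fun j => ?_, ?_⟩
      · simp only [hxdef]
        split_ifs with h
        · exact hcz _
        · exact ⟨hs0, hs1⟩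
      · funext i
        have hmulx : (Γ *ᵥ x) i = (∑ j, L i j * (z j - c)) + ∑ j, z j := by
          simp only [Matrix.mulVec, dotProduct]
          rw [Fin.sum_univ_castSucc]
          simp only [hΓc, hΓl, hxc, hxl, one_mul]
        have h2 : ∑ j, L i j * (z j - c) = (L *ᵥ z) i := by
          simp only [Matrix.mulVec, dotProduct, mul_sub]
          rw [Finset.sum_sub_distrib, ← Finset.sum_mul, hrow]
          ring
        rw [hmulx, h2, Matrix.add_mulVec, Pi.add_apply, hJv]
  rw [hzon, Measure.addHaar_image_linearMap, LinearMap.det_toLin', Sset_vol, mul_one]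
  have hPSD : (L + J).PosSemidef := by
    have hLp : (SimpleGraph.lapMatrix ℝ G).PosSemidef := SimpleGraph.posSemidef_lapMatrix ℝ G
    have hJp : J.PosSemidef := by
      rw [Matrix.posSemidef_iff_dotProduct_mulVec]
      constructor
      · rw [hJ]
        ext i j
        exact star_trivial (1:ℝ)
      · intro x
        have hmv : J *ᵥ x = fun _ => ∑ j, x j := by
          funext i; exact hJv x i
        rw [star_trivial, hmv, dotProduct]
        rw [← Finset.sum_mul]
        exact mul_self_nonneg _
    exact (hLdef ▸ hLp).add hJp
  have hdet : 0 ≤ (L + J).det := by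
    exact hPSD.det_nonneg
  rw [abs_of_nonneg hdet]
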